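/- For any R ∈ (0, √((n-2)/n)) and n ≥ 3, the Inner NWSS strictly exceeds the Outer NWSS: τ₁(R) > √n > τ₂(R). -/

import Mathlib

open Set

/-- The auxiliary function `G(r) = f'(r)^2 + 4 n f(r)` for the
Schwarzschild–de Sitter type lapse `f(r) = 1 - r^2 - 2R^n/((n-2) r^{n-2})`,
written with `n = m + 3`. -/
noncomputable def GfunNWSS (m : ℕ) (R : ℝ) : ℝ → ℝ := fun r =>
  (2 * R ^ (m + 3) / r ^ (m + 2) - 2 * r) ^ 2
    + 4 * ((m : ℝ) + 3) * (1 - r ^ 2 - 2 * R ^ (m + 3) / (((m : ℝ) + 1) * r ^ (m + 1)))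

lemma GfunNWSS_hasDerivAt (m : ℕ) (R r : ℝ) (hr : r ≠ 0) :
    HasDerivAt (GfunNWSS m R)
      (-8 * ((m : ℝ) + 2) * (R ^ (m + 3) - r ^ (m + 3)) ^ 2 / r ^ (2 * m + 5)) r := by
  have hden : (((m : ℝ) + 1) * r ^ (m + 1)) ≠ 0 := by positivity
  have h1 : HasDerivAt (fun x : ℝ => 2 * R ^ (m + 3) / x ^ (m + 2) - 2 * x)
      ((0 * r ^ (m + 2) - 2 * R ^ (m + 3) * (((m + 2 : ℕ) : ℝ) * r ^ (m + 2 - 1))) /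
        (r ^ (m + 2)) ^ 2 - 2) r := by
    exact ((hasDerivAt_const r (2 * R ^ (m + 3))).div (hasDerivAt_pow (m + 2) r)
      (pow_ne_zero _ hr)).sub (by simpa using (hasDerivAt_id r).const_mul (2:ℝ))
  have h3 := h1.pow 2
  have hd2 : HasDerivAt (fun x : ℝ => ((m : ℝ) + 1) * x ^ (m + 1))
      (((m : ℝ) + 1) * (((m + 1 : ℕ) : ℝ) * r ^ (m + 1 - 1))) r :=
    (hasDerivAt_pow (m + 1) r).const_mul _
  have h5 : HasDerivAt (fun x : ℝ => 1 - x ^ 2 - 2 * R ^ (m + 3) / (((m : ℝ) + 1) * x ^ (m + 1)))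
      (0 - ((2 : ℕ) : ℝ) * r ^ (2 - 1) -
        (0 * (((m : ℝ) + 1) * r ^ (m + 1)) -
          2 * R ^ (m + 3) * (((m : ℝ) + 1) * (((m + 1 : ℕ) : ℝ) * r ^ (m + 1 - 1)))) /
          (((m : ℝ) + 1) * r ^ (m + 1)) ^ 2) r := by
    exact ((hasDerivAt_const r (1:ℝ)).sub (hasDerivAt_pow 2 r)).sub
      ((hasDerivAt_const r (2 * R ^ (m + 3))).div hd2 hden)
  have h7 := h3.add (h5.const_mul (4 * ((m : ℝ) + 3)))
  refine h7.congr_deriv ?_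
  have hm1 : ((m : ℝ) + 1) ≠ 0 := by positivity
  simp only [Nat.add_sub_cancel]
  push_cast
  field_simp
  ring

lemma GfunNWSS_anti (m : ℕ) (R a b : ℝ) (ha : 0 < a) (hab : a < b)
    (hne : ∀ r ∈ Set.Ioo a b, R ^ (m + 3) ≠ r ^ (m + 3)) :
    GfunNWSS m R b < GfunNWSS m R a := by
  have h : StrictAntiOn (GfunNWSS m R) (Set.Icc a b) := by
    apply strictAntiOn_of_deriv_neg (convex_Icc a b)
    · intro r hr
      have hr0 : r ≠ 0 := by
        have := hr.1; nlinarith [hr.1]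
      exact (GfunNWSS_hasDerivAt m R r hr0).continuousAt.continuousWithinAt
    · intro r hr
      rw [interior_Icc] at hr
      have hr0 : 0 < r := lt_trans ha hr.1
      rw [(GfunNWSS_hasDerivAt m R r hr0.ne').deriv]
      have hnum : 0 < (R ^ (m + 3) - r ^ (m + 3)) ^ 2 := by
        have := hne r hr
        have : R ^ (m + 3) - r ^ (m + 3) ≠ 0 := sub_ne_zero.mpr this
        positivity
      have hden : 0 < r ^ (2 * m + 5) := by positivity
      exact div_neg_of_neg_of_pos (by nlinarith) hden
  exact h (Set.left_mem_Icc.mpr hab.le) (Set.right_mem_Icc.mpr hab.le) hab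

set_option maxHeartbeats 800000 in
theorem inner_NWSS_gt_sqrt_n_gt_outer_NWSS (n : ℕ) (hn : 3 ≤ n) (R : ℝ)
    (hR0 : 0 < R) (hRmax : R < Real.sqrt (((n : ℝ) - 2) / n))
    (r₁ r₂ : ℝ) (hr₁0 : 0 < r₁) (hr₁R : r₁ < R) (hRr₂ : R < r₂)
    (hz₁ : 1 - r₁ ^ 2 - 2 * R ^ n / (((n : ℝ) - 2) * r₁ ^ (n - 2)) = 0)
    (hz₂ : 1 - r₂ ^ 2 - 2 * R ^ n / (((n : ℝ) - 2) * r₂ ^ (n - 2)) = 0) :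
    r₁ * (R ^ n / r₁ ^ n - 1) / Real.sqrt (1 - n * R ^ 2 / ((n : ℝ) - 2)) > Real.sqrt n ∧
    Real.sqrt n > r₂ * (1 - R ^ n / r₂ ^ n) / Real.sqrt (1 - n * R ^ 2 / ((n : ℝ) - 2)) := by
  obtain ⟨m, rfl⟩ : ∃ m, n = m + 3 := ⟨n - 3, by omega⟩
  have hr₂0 : 0 < r₂ := lt_trans hR0 hRr₂
  have hcast : ((m + 3 : ℕ) : ℝ) - 2 = (m : ℝ) + 1 := by push_cast; ring
  have hexp : m + 3 - 2 = m + 1 := by omega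
  rw [hcast, hexp] at hz₁ hz₂
  set s : ℝ := 1 - ((m + 3 : ℕ) : ℝ) * R ^ 2 / (((m + 3 : ℕ) : ℝ) - 2) with hs_def
  have hs_eq : s = 1 - ((m : ℝ) + 3) * R ^ 2 / ((m : ℝ) + 1) := by
    rw [hs_def]; push_cast; ring
  -- s > 0
  have hs_pos : 0 < s := by
    have h1 : R ^ 2 < ((m : ℝ) + 1) / ((m : ℝ) + 3) := by
      have := (Real.lt_sqrt hR0.le).mp hRmax
      calc R ^ 2 < (((m + 3 : ℕ) : ℝ) - 2) / ((m + 3 : ℕ) : ℝ) := this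
        _ = ((m : ℝ) + 1) / ((m : ℝ) + 3) := by push_cast; ring
    rw [hs_eq]
    have hm3 : (0:ℝ) < (m : ℝ) + 3 := by positivity
    have hm1 : (0:ℝ) < (m : ℝ) + 1 := by positivity
    rw [sub_pos, div_lt_one hm1]
    calc ((m : ℝ) + 3) * R ^ 2 < ((m : ℝ) + 3) * (((m : ℝ) + 1) / ((m : ℝ) + 3)) := by
          exact mul_lt_mul_of_pos_left h1 hm3
      _ = (m : ℝ) + 1 := by field_simp
  -- value of G at R
  have hGR : GfunNWSS m R R = 4 * ((m : ℝ) + 3) * s := by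
    rw [hs_eq]
    unfold GfunNWSS
    have hm1 : ((m : ℝ) + 1) ≠ 0 := by positivity
    have hRne : R ≠ 0 := hR0.ne'
    field_simp
    ring
  -- value of G at r₁, r₂ (zeros of f)
  have hGr₁ : GfunNWSS m R r₁ = (2 * R ^ (m + 3) / r₁ ^ (m + 2) - 2 * r₁) ^ 2 := by
    unfold GfunNWSS; rw [hz₁]; ring
  have hGr₂ : GfunNWSS m R r₂ = (2 * R ^ (m + 3) / r₂ ^ (m + 2) - 2 * r₂) ^ 2 := by
    unfold GfunNWSS; rw [hz₂]; ring
  -- strict monotonicity conclusions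
  have hA : 4 * ((m : ℝ) + 3) * s < (2 * R ^ (m + 3) / r₁ ^ (m + 2) - 2 * r₁) ^ 2 := by
    rw [← hGR, ← hGr₁]
    apply GfunNWSS_anti m R r₁ R hr₁0 hr₁R
    intro r hr
    have h1 : r ^ (m + 3) < R ^ (m + 3) :=
      pow_lt_pow_left₀ hr.2 (le_trans hr₁0.le hr.1.le) (by omega)
    exact fun h => absurd h.symm (ne_of_lt h1)
  have hB : (2 * R ^ (m + 3) / r₂ ^ (m + 2) - 2 * r₂) ^ 2 < 4 * ((m : ℝ) + 3) * s := by
    rw [← hGR, ← hGr₂]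
    apply GfunNWSS_anti m R R r₂ hR0 hRr₂
    intro r hr
    have h1 : R ^ (m + 3) < r ^ (m + 3) := pow_lt_pow_left₀ hr.1 hR0.le (by omega)
    exact ne_of_lt h1
  -- rewrite the target quantities
  have hq₁ : r₁ * (R ^ (m + 3) / r₁ ^ (m + 3) - 1)
      = R ^ (m + 3) / r₁ ^ (m + 2) - r₁ := by
    field_simp
    ring
  have hq₂ : r₂ * (1 - R ^ (m + 3) / r₂ ^ (m + 3))
      = r₂ - R ^ (m + 3) / r₂ ^ (m + 2) := by
    field_simp
    ring
  set a : ℝ := R ^ (m + 3) / r₁ ^ (m + 2) - r₁ with ha_def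
  set b : ℝ := r₂ - R ^ (m + 3) / r₂ ^ (m + 2) with hb_def
  have haa : 2 * R ^ (m + 3) / r₁ ^ (m + 2) - 2 * r₁ = 2 * a := by rw [ha_def]; ring
  have hbb : 2 * R ^ (m + 3) / r₂ ^ (m + 2) - 2 * r₂ = -(2 * b) := by rw [hb_def]; ring
  rw [haa] at hA
  rw [hbb] at hB
  have ha_sq : ((m : ℝ) + 3) * s < a ^ 2 := by nlinarith [hA]
  have hb_sq : b ^ 2 < ((m : ℝ) + 3) * s := by nlinarith [hB]
  have ha_pos : 0 < a := by
    rw [ha_def]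
    have h1 : r₁ ^ (m + 3) < R ^ (m + 3) := pow_lt_pow_left₀ hr₁R hr₁0.le (by omega)
    rw [sub_pos, lt_div_iff₀ (by positivity)]
    calc r₁ * r₁ ^ (m + 2) = r₁ ^ (m + 3) := by ring
      _ < R ^ (m + 3) := h1
  have hts : 0 < Real.sqrt s := Real.sqrt_pos.mpr hs_pos
  have hm3cast : ((m + 3 : ℕ) : ℝ) = (m : ℝ) + 3 := by push_cast; ring
  have hsqrt_mul : Real.sqrt (((m : ℝ) + 3) * s)
      = Real.sqrt ((m : ℝ) + 3) * Real.sqrt s := Real.sqrt_mul (by positivity) s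
  constructor
  · rw [hq₁]
    rw [gt_iff_lt, lt_div_iff₀ hts, hm3cast, ← hsqrt_mul]
    exact (Real.sqrt_lt' ha_pos).mpr ha_sq
  · rw [hq₂]
    rw [gt_iff_lt, div_lt_iff₀ hts, hm3cast, ← hsqrt_mul]
    calc b ≤ |b| := le_abs_self b
      _ = Real.sqrt (b ^ 2) := (Real.sqrt_sq_eq_abs b).symm
      _ < Real.sqrt (((m : ℝ) + 3) * s) := by
          exact Real.sqrt_lt_sqrt (sq_nonneg b) hb_sq
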